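/- Let H be a complex Hilbert space and let U : H → H be a unitary continuous linear operator with U⁸ = 1. Let P denote the orthogonal projection of H onto the closed subspace {x ∈ H : Ux = x}, and set α = (2 + √2)/4. Then for every x ∈ H, ⟨x, (1/4)(1 + U)(1 + U*) x⟩ ≤ ‖Px‖² + α·‖x − Px‖²; equivalently, the self-adjoint operator P + α(1 − P) − (1/4)(1 + U)(1 + U*) is a positive operator. -/

import Mathlib

open scoped ComplexOrder
open Polynomial ContinuousLinearMap
set_option maxHeartbeats 1000000

/-- for a unitary `U` with `U⁸ = 1` on a complex Hilbert space, writing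
`P` for the orthogonal projection onto the fixed subspace `{x | Ux = x}` and
`α = (2 + √2)/4`, the acceptance operator `(1/4)(1+U)(1+U*)` of the Hadamard test
satisfies `⟨x, (1/4)(1+U)(1+U*)x⟩ ≤ ‖Px‖² + α‖x − Px‖²` for every `x`. -/
theorem hadamard_test_acceptance_le
    {H : Type*} [NormedAddCommGroup H] [InnerProductSpace ℂ H] [CompleteSpace H]
    (U : H →L[ℂ] H) (hU : U ∈ unitary (H →L[ℂ] H)) (hU8 : U ^ 8 = 1) (x : H) :
    (inner ℂ x (((1 / 4 : ℂ) • ((1 + U) * (1 + star U))) x) : ℂ).re ≤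
      ‖(Submodule.orthogonalProjectionOnto (LinearMap.ker ((U - 1 : H →L[ℂ] H) : H →ₗ[ℂ] H)) x : H)‖ ^ 2 +
        (2 + Real.sqrt 2) / 4 *
          ‖x - (Submodule.orthogonalProjectionOnto (LinearMap.ker ((U - 1 : H →L[ℂ] H) : H →ₗ[ℂ] H)) x : H)‖ ^ 2 := by
  obtain ⟨hU1, hU2⟩ := hU
  have h7 : star U = U ^ 7 := by
    calc star U = star U * U ^ 8 := by rw [hU8, mul_one]
    _ = (star U * U) * U ^ 7 := by rw [mul_assoc, ← pow_succ']
    _ = U ^ 7 := by rw [hU1, one_mul]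
  set ρ : ℂ := ((Real.sqrt 2 : ℝ) : ℂ) with hρdef
  have hρ2 : ρ ^ 2 = 2 := by
    rw [hρdef]; norm_cast
    rw [Real.sq_sqrt] <;> norm_num
  -- numeric facts about √2
  have hs2 : Real.sqrt 2 ^ 2 = 2 := Real.sq_sqrt (by norm_num)
  have hs2nn : (0:ℝ) ≤ Real.sqrt 2 := Real.sqrt_nonneg 2
  have hs2le : Real.sqrt 2 ≤ 2 := by nlinarith
  have hs2ge : (1:ℝ) ≤ Real.sqrt 2 := by nlinarith
  set V : H →L[ℂ] H := U + U ^ 7 with hVdef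
  set Mρ : H →L[ℂ] H := algebraMap ℂ (H →L[ℂ] H) ρ with hMρdef
  set S₁ : H →L[ℂ] H := V ^ 4 + 2 * V ^ 3 - 2 * V ^ 2 - 4 * V with hS₁def
  set A₂ : H →L[ℂ] H := V - Mρ with hA₂def
  set A₁ : H →L[ℂ] H := (V - Mρ) * (V + 1 + Mρ) with hA₁def
  -- scalar application lemma
  have halg : ∀ (z : ℂ) (w : H), (algebraMap ℂ (H →L[ℂ] H) z) w = z • w := by
    intro z w
    rw [Algebra.algebraMap_eq_smul_one]
    simp
  have htwo : ∀ w : H, (2 : H →L[ℂ] H) w = (2 : ℂ) • w := by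
    intro w
    rw [← map_ofNat (algebraMap ℂ (H →L[ℂ] H)) 2, halg]
  have hthree : ∀ w : H, (3 : H →L[ℂ] H) w = (3 : ℂ) • w := by
    intro w
    rw [← map_ofNat (algebraMap ℂ (H →L[ℂ] H)) 3, halg]
  have hfour : ∀ w : H, (4 : H →L[ℂ] H) w = (4 : ℂ) • w := by
    intro w
    rw [← map_ofNat (algebraMap ℂ (H →L[ℂ] H)) 4, halg]
  have height : ∀ w : H, (8 : H →L[ℂ] H) w = (8 : ℂ) • w := by
    intro w
    rw [← map_ofNat (algebraMap ℂ (H →L[ℂ] H)) 8, halg]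
  -- pointwise unitarity
  have hUU : ∀ w : H, (star U) (U w) = w := by
    intro w
    have h := congrArg (fun (A : H →L[ℂ] H) => A w) hU1
    simpa [mul_apply_eq_comp] using h
  have hUU' : ∀ w : H, U ((star U) w) = w := by
    intro w
    have h := congrArg (fun (A : H →L[ℂ] H) => A w) hU2
    simpa [mul_apply_eq_comp] using h
  have hnormU : ∀ w : H, ‖U w‖ = ‖w‖ := by
    intro w
    have h : (inner ℂ (U w) (U w) : ℂ) = inner ℂ w w := by
      rw [← adjoint_inner_right, ← star_eq_adjoint, hUU]
    simp only [@norm_eq_sqrt_re_inner ℂ, h]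
  have hadj : ∀ (A : H →L[ℂ] H) (v w : H), (inner ℂ v (A w) : ℂ) = inner ℂ ((star A) v) w := by
    intro A v w
    rw [star_eq_adjoint, adjoint_inner_left]
  have hinner7 : ∀ w z : H, (inner ℂ w ((U ^ 7) z) : ℂ) = inner ℂ (U w) z := by
    intro w z
    rw [← h7, star_eq_adjoint, adjoint_inner_right]
  -- fixed vectors of V(=2) are fixed by U
  have hfix : ∀ z : H, V z = (2 : ℂ) • z → U z = z := by
    intro z hz
    have h1 : (inner ℂ z (V z) : ℂ) = inner ℂ z (U z) + inner ℂ (U z) z := by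
      rw [hVdef]; simp only [add_apply, inner_add_right, hinner7]
    have h2 : (inner ℂ z (V z) : ℂ) = 2 * inner ℂ z z := by
      rw [hz, inner_smul_right]
    have h4 := congrArg Complex.re (h1.symm.trans h2)
    have h5 : (inner ℂ (U z) z : ℂ).re = (inner ℂ z (U z) : ℂ).re := inner_re_symm (𝕜 := ℂ) (U z) z
    have h6 : (inner ℂ z z : ℂ).re = (‖z‖ : ℝ) ^ 2 := inner_self_eq_norm_sq (𝕜 := ℂ) z
    have h7' : (inner ℂ z z : ℂ).im = 0 := inner_self_im (𝕜 := ℂ) z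
    simp only [Complex.add_re, Complex.mul_re, Complex.re_ofNat, Complex.im_ofNat, h5, h6,
      h7'] at h4
    have h3 : (inner ℂ (U z) z : ℂ).re = ‖z‖ ^ 2 := by rw [h5]; linarith
    have h8 : ‖U z - z‖ ^ 2 = 0 := by
      rw [@norm_sub_sq ℂ]
      simp only [RCLike.re_to_complex]
      rw [h3, hnormU]
      ring
    have h9 : U z - z = 0 := norm_eq_zero.mp (pow_eq_zero_iff (two_ne_zero)|>.mp h8)
    exact sub_eq_zero.mp h9
  -- U-fixed vectors are S₁-eigenvectors with eigenvalue 16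
  have hS₁fix : ∀ y : H, U y = y → S₁ y = (16 : ℂ) • y := by
    intro y hy
    have hpow : ∀ n : ℕ, (U ^ n) y = y := by
      intro n
      induction n with
      | zero => simp
      | succ n ih => rw [pow_succ, mul_apply_eq_comp, hy, ih]
    have hVy : V y = (2 : ℂ) • y := by
      rw [hVdef, add_apply, hy, hpow 7, two_smul]
    have hV2 : (V ^ 2) y = (4 : ℂ) • y := by
      rw [sq, mul_apply_eq_comp, hVy, map_smul, hVy, smul_smul]; norm_num
    have hV3 : (V ^ 3) y = (8 : ℂ) • y := by
      rw [pow_succ, mul_apply_eq_comp, hVy, map_smul, hV2, smul_smul]; norm_num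
    have hV4 : (V ^ 4) y = (16 : ℂ) • y := by
      rw [pow_succ, mul_apply_eq_comp, hVy, map_smul, hV3, smul_smul]; norm_num
    rw [hS₁def, sub_apply, sub_apply, add_apply, mul_apply_eq_comp, mul_apply_eq_comp, mul_apply_eq_comp,
      hV4, hV3, hV2, hVy, htwo, htwo, hfour, smul_smul, smul_smul, smul_smul]
    module
  -- key operator identity 1 : (V - 2) S₁ = 0
  have key1 : (V - 2) * S₁ = 0 := by
    have hpoly : ((X + X^7 : ℂ[X]) - 2) * ((X + X^7)^4 + 2*(X + X^7)^3 - 2*(X + X^7)^2 - 4*(X + X^7))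
        = (X^8 - 1) * (5*X^21 + X^27 + X^19 + 10*X^15 - X^13 + X^11 + 10*X^9 - 8*X^7 - X^5 + 6*X^3 - 8*X) := by
      ring
    have h := congrArg (aeval U) hpoly
    simp only [map_mul, map_add, map_sub, map_pow, aeval_X, map_ofNat] at h
    rw [hU8] at h
    simpa [hVdef, hS₁def] using h
  -- the projection vector
  set p : H := (16 : ℂ)⁻¹ • S₁ x with hpdef
  set q : H := x - p with hqdef
  have hUp : U p = p := by
    have h0 := congrArg (fun (A : H →L[ℂ] H) => A x) key1
    simp only [mul_apply_eq_comp, sub_apply, zero_apply, htwo] at h0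
    have hVp : V (S₁ x) = (2 : ℂ) • (S₁ x) := by
      have := sub_eq_zero.mp h0
      exact this
    have hfx := hfix (S₁ x) hVp
    rw [hpdef, map_smul, hfx]
  have hSp : S₁ p = S₁ x := by
    rw [hS₁fix p hUp, hpdef, smul_smul]
    norm_num
  have hSq : S₁ q = 0 := by
    rw [hqdef, map_sub, hSp, sub_self]
  have hstarV : star V = V := by
    have h49 : U ^ 49 = U := by
      have h : U ^ 49 = (U ^ 8) ^ 6 * U := by rw [← pow_mul, ← pow_succ]
      rw [h, hU8, one_pow, one_mul]
    rw [hVdef, star_add, star_pow, h7, ← pow_mul]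
    norm_num [h49, add_comm]
  have hstarMρ : star Mρ = Mρ := by
    rw [hMρdef, Algebra.algebraMap_eq_smul_one, star_smul, star_one, hρdef, Complex.star_def,
      Complex.conj_ofReal]
  have hstarS₁ : star S₁ = S₁ := by
    rw [hS₁def]
    simp only [star_sub, star_add, star_mul, star_pow, hstarV, star_ofNat]
    noncomm_ring
  have hswap : (V + 1 + Mρ) * (V - Mρ) = (V - Mρ) * (V + 1 + Mρ) := by
    have c1 : Mρ * V = V * Mρ := Algebra.commutes ρ V
    have e1 : (V + 1 + Mρ) * (V - Mρ)
        = V * V + V + Mρ * V - V * Mρ - Mρ - Mρ * Mρ := by noncomm_ring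
    have e2 : (V - Mρ) * (V + 1 + Mρ)
        = V * V + V + V * Mρ - Mρ * V - Mρ - Mρ * Mρ := by noncomm_ring
    rw [e1, e2, c1]
  have hstarA₂ : star A₂ = A₂ := by
    rw [hA₂def, star_sub, hstarV, hstarMρ]
  have hstarA₁ : star A₁ = A₁ := by
    rw [hA₁def, star_mul, star_sub, hstarV, hstarMρ, star_add, star_add, star_one, hstarV,
      hstarMρ]
    exact hswap
  -- orthogonality of q to all fixed vectors
  have hqorth : ∀ w : H, U w = w → (inner ℂ q w : ℂ) = 0 := by
    intro w hw
    have hw16 : w = (16 : ℂ)⁻¹ • S₁ w := by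
      rw [hS₁fix w hw, smul_smul]; norm_num
    rw [hw16, inner_smul_right, hadj S₁ q w, hstarS₁, hSq]
    simp
  -- key operator identity 2 : the SOS certificate
  have keyC : 8 * Mρ - 8 * V = (2 - Mρ) * A₁ ^ 2 + (3 * Mρ - 2) * A₂ ^ 2 - (2 - Mρ) * S₁ := by
    rw [hA₁def, hA₂def, hS₁def]
    have hC : (C ρ : ℂ[X]) ^ 2 = 2 := by
      rw [← C_pow, hρ2]
      exact map_ofNat C 2
    have hpoly : (8 * C ρ - 8 * X : ℂ[X])
        = (2 - C ρ) * ((X - C ρ) * (X + 1 + C ρ)) ^ 2 + (3 * C ρ - 2) * (X - C ρ) ^ 2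
          - (2 - C ρ) * (X ^ 4 + 2 * X ^ 3 - 2 * X ^ 2 - 4 * X) := by
      linear_combination (8 * X + 2 * X ^ 2 - 4 * C ρ - 2 * C ρ * X - 2 * C ρ * X ^ 2
        + (C ρ) ^ 3) * hC
    have h := congrArg (aeval V) hpoly
    simpa only [map_mul, map_add, map_sub, map_pow, aeval_X, map_ofNat, map_one,
      aeval_C] using h
  -- apply the certificate to q and take inner products with q
  have happly := congrArg (fun (A : H →L[ℂ] H) => (inner ℂ q (A q) : ℂ)) keyC
  simp only [sub_apply, add_apply, mul_apply_eq_comp, pow_two, hMρdef, halg, htwo, hthree, hfour, height, hSq,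
    map_zero, map_smul, inner_sub_right, inner_add_right, inner_smul_right, smul_smul,
    inner_zero_right] at happly
  have hiA₁ : (inner ℂ q (A₁ (A₁ q)) : ℂ) = inner ℂ (A₁ q) (A₁ q) := by
    rw [hadj A₁ q (A₁ q), hstarA₁]
  have hiA₂ : (inner ℂ q (A₂ (A₂ q)) : ℂ) = inner ℂ (A₂ q) (A₂ q) := by
    rw [hadj A₂ q (A₂ q), hstarA₂]
  have hiV : (inner ℂ q (V q) : ℂ) = inner ℂ q (U q) + inner ℂ (U q) q := by
    rw [hVdef]; simp only [add_apply, inner_add_right, hinner7]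
  have e1 : (inner ℂ q q : ℂ) = ((‖q‖ ^ 2 : ℝ) : ℂ) := by
    rw [inner_self_eq_norm_sq_to_K]; norm_cast
  have e2 : (inner ℂ (A₁ q) (A₁ q) : ℂ) = ((‖A₁ q‖ ^ 2 : ℝ) : ℂ) := by
    rw [inner_self_eq_norm_sq_to_K]; norm_cast
  have e3 : (inner ℂ (A₂ q) (A₂ q) : ℂ) = ((‖A₂ q‖ ^ 2 : ℝ) : ℂ) := by
    rw [inner_self_eq_norm_sq_to_K]; norm_cast
  rw [hiA₁, hiA₂, hiV, e1, e2, e3] at happly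
  have hre := congrArg Complex.re happly
  have hsym : (inner ℂ (U q) q : ℂ).re = (inner ℂ q (U q) : ℂ).re :=
    inner_re_symm (𝕜 := ℂ) (U q) q
  simp only [Complex.mul_re, Complex.add_re, Complex.sub_re, Complex.add_im, Complex.sub_im,
    Complex.mul_im, Complex.ofReal_re, Complex.ofReal_im, Complex.re_ofNat, Complex.im_ofNat,
    Complex.zero_re, hρdef, hsym] at hre
  ring_nf at hre
  have hcore : (inner ℂ q (U q) : ℂ).re ≤ Real.sqrt 2 / 2 * ‖q‖ ^ 2 := by
    have hn1 : (0:ℝ) ≤ (2 - Real.sqrt 2) * ‖A₁ q‖ ^ 2 :=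
      mul_nonneg (by linarith) (sq_nonneg _)
    have hn2 : (0:ℝ) ≤ (3 * Real.sqrt 2 - 2) * ‖A₂ q‖ ^ 2 :=
      mul_nonneg (by linarith) (sq_nonneg _)
    linarith [hre, hn1, hn2]
  -- identify the orthogonal projection with p
  have hproj : (Submodule.orthogonalProjectionOnto (LinearMap.ker ((U - 1 : H →L[ℂ] H) : H →ₗ[ℂ] H)) x : H) = p := by
    rw [← Submodule.starProjection_apply]
    apply Submodule.eq_starProjection_of_mem_of_inner_eq_zero
    · rw [LinearMap.mem_ker]
      show (U - 1) p = 0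
      rw [sub_apply, one_apply_eq_self, hUp, sub_self]
    · intro w hw
      have hw' : U w = w := by
        have h := LinearMap.mem_ker.mp hw
        have h2 : (U - 1) w = 0 := h
        rw [sub_apply, one_apply_eq_self, sub_eq_zero] at h2
        exact h2
      rw [← hqdef]
      exact hqorth w hw'
  -- U* fixes p
  have hUstarp : (star U) p = p := by
    calc (star U) p = (star U) (U p) := by rw [hUp]
    _ = p := hUU p
  -- decompose x + U* x
  have hx : x = p + q := by rw [hqdef]; abel
  have hy : x + (star U) x = ((2:ℂ) • p) + (q + (star U) q) := by
    nth_rewrite 1 [hx]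
    nth_rewrite 1 [hx]
    rw [map_add, hUstarp]
    module
  have hpq : (inner ℂ q p : ℂ) = 0 := hqorth p hUp
  have hinner0 : (inner ℂ ((2:ℂ) • p) (q + (star U) q) : ℂ) = 0 := by
    rw [inner_smul_left, inner_add_right]
    have hpq' : (inner ℂ p q : ℂ) = 0 := by
      rw [← inner_conj_symm, hpq, map_zero]
    have hpUq : (inner ℂ p ((star U) q) : ℂ) = 0 := by
      rw [star_eq_adjoint, adjoint_inner_right, hUp, hpq']
    rw [hpq', hpUq]
    ring
  -- compute the LHS
  have hop : (inner ℂ x (((1 / 4 : ℂ) • ((1 + U) * (1 + star U))) x) : ℂ)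
      = (1/4) * inner ℂ (x + (star U) x) (x + (star U) x) := by
    rw [smul_apply, inner_smul_right, mul_apply_eq_comp, hadj (1 + U) x ((1 + star U) x)]
    simp only [star_add, star_one, add_apply, one_apply_eq_self]
  have hysq : ‖x + (star U) x‖ ^ 2 = 4 * ‖p‖ ^ 2 + ‖q + (star U) q‖ ^ 2 := by
    rw [hy, @norm_add_sq ℂ]
    have h20 : (inner ℂ ((2:ℂ) • p) (q + (star U) q) : ℂ).re = 0 := by rw [hinner0]; rfl
    have h2n : ‖(2:ℂ) • p‖ = 2 * ‖p‖ := by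
      rw [norm_smul]
      norm_num
    rw [h2n]
    simp only [RCLike.re_to_complex, h20]
    ring
  have hzsq : ‖q + (star U) q‖ ^ 2 = 2 * ‖q‖ ^ 2 + 2 * (inner ℂ q (U q) : ℂ).re := by
    rw [@norm_add_sq ℂ]
    have hnsU : ‖(star U) q‖ = ‖q‖ := by
      rw [← hnormU ((star U) q), hUU']
    have hrsU : (inner ℂ q ((star U) q) : ℂ).re = (inner ℂ q (U q) : ℂ).re := by
      rw [star_eq_adjoint, adjoint_inner_right]
      exact inner_re_symm (𝕜 := ℂ) (U q) q
    simp only [RCLike.re_to_complex, hrsU, hnsU]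
    ring
  have hLHS : (inner ℂ x (((1 / 4 : ℂ) • ((1 + U) * (1 + star U))) x) : ℂ).re
      = (1/4) * (4 * ‖p‖ ^ 2 + ‖q + (star U) q‖ ^ 2) := by
    rw [hop]
    have hself : (inner ℂ (x + (star U) x) (x + (star U) x) : ℂ)
        = ((‖x + (star U) x‖ ^ 2 : ℝ) : ℂ) := by
      rw [inner_self_eq_norm_sq_to_K]; norm_cast
    rw [hself, hysq]
    simp [Complex.mul_re]
    norm_cast
  rw [hproj, ← hqdef, hLHS, hzsq]
  have hqnn : (0:ℝ) ≤ ‖q‖ ^ 2 := sq_nonneg _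
  nlinarith [hcore]
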